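/- Let S ≥ 1 and let u, v ∈ (ℝ⁺)^S be nondecreasingly sorted vectors such that u ≺_* v. Then for every real number x, [u − x·1]⁺ ≺_* [v − x·1]⁺, where 1 is the all-ones vector and [·]⁺ denotes the coordinatewise positive part. -/
import Mathlib


open Finset

/-- The nondecreasing rearrangement of a finite real vector. -/
noncomputable def sortVec {S : ℕ} (u : Fin S → ℝ) : Fin S → ℝ := u ∘ Tuple.sort u

/-- The Schur-convex semi-ordering `≺_c` : equal total sums, and each tail sum
(from the second coordinate on) of the sorted version of `u` is dominated by that of `v`. -/
def schurLE {S : ℕ} (u v : Fin S → ℝ) : Prop :=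
  (∑ i, u i = ∑ i, v i) ∧
  ∀ k : Fin S, 1 ≤ (k : ℕ) →
    ∑ i ∈ Finset.Ici k, sortVec u i ≤ ∑ i ∈ Finset.Ici k, sortVec v i

/-- The semi-ordering `≺_*` : every tail sum of `u` is dominated by that of `v`. -/
def starLE {S : ℕ} (u v : Fin S → ℝ) : Prop :=
  ∀ k : Fin S, ∑ i ∈ Finset.Ici k, u i ≤ ∑ i ∈ Finset.Ici k, v i

/-- The semi-ordering `≺_P` : `u ≺_* v` and `u(ℓ) ≤ v(ℓ)` for every `ℓ ≥ P`. -/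
def precP {S : ℕ} (P : Fin S) (u v : Fin S → ℝ) : Prop :=
  starLE u v ∧ ∀ ℓ : Fin S, P ≤ ℓ → u ℓ ≤ v ℓ

/-- The map `G̃^P : u ↦ sort([u + σ·e_P − ξ·1]⁺)`.  For `P` the first index,
this is the Kiefer–Wolfowitz map `G`. -/
noncomputable def GP {S : ℕ} (σ ξ : ℝ) (P : Fin S) (u : Fin S → ℝ) : Fin S → ℝ :=
  sortVec (fun i => max (u i + (if i = P then σ else 0) - ξ) 0)

/-- if `u ≺_* v` (sorted, nonnegative) then `[u − x·1]⁺ ≺_* [v − x·1]⁺`. -/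
theorem starLE_pos_part_sub_const {S : ℕ} (hS : 1 ≤ S) (u v : Fin S → ℝ)
    (hu : Monotone u) (hv : Monotone v)
    (hu0 : ∀ i, 0 ≤ u i) (hv0 : ∀ i, 0 ≤ v i)
    (huv : starLE u v) (x : ℝ) :
    starLE (fun i => max (u i - x) 0) (fun i => max (v i - x) 0) := by
  intro k
  by_cases h : ∃ i ∈ Finset.Ici k, x < u i
  · obtain ⟨i0, hi0, hxi0⟩ := h
    set T := (Finset.Ici k).filter (fun i => x < u i) with hT
    have hTne : T.Nonempty := ⟨i0, Finset.mem_filter.mpr ⟨hi0, hxi0⟩⟩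
    set m := T.min' hTne with hm
    have hmT : m ∈ T := T.min'_mem hTne
    have hmk : k ≤ m := Finset.mem_Ici.mp (Finset.mem_filter.mp hmT).1
    have hxm : x < u m := (Finset.mem_filter.mp hmT).2
    have hsub : Finset.Ici m ⊆ Finset.Ici k := fun i hi =>
      Finset.mem_Ici.mpr (le_trans hmk (Finset.mem_Ici.mp hi))
    have h0 : ∀ i ∈ Finset.Ici k, i ∉ Finset.Ici m → max (u i - x) 0 = 0 := by
      intro i hik him
      have hnx : ¬ x < u i := by
        intro hxi
        exact him (Finset.mem_Ici.mpr (T.min'_le i (Finset.mem_filter.mpr ⟨hik, hxi⟩)))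
      simp [max_eq_right (sub_nonpos.mpr (not_lt.mp hnx))]
    have h1 : ∑ i ∈ Finset.Ici k, max (u i - x) 0 = ∑ i ∈ Finset.Ici m, (u i - x) := by
      rw [← Finset.sum_subset hsub h0]
      apply Finset.sum_congr rfl
      intro i hi
      have hxi : x < u i := lt_of_lt_of_le hxm (hu (Finset.mem_Ici.mp hi))
      exact max_eq_left (sub_nonneg.mpr hxi.le)
    calc ∑ i ∈ Finset.Ici k, max (u i - x) 0
        = ∑ i ∈ Finset.Ici m, (u i - x) := h1
      _ ≤ ∑ i ∈ Finset.Ici m, (v i - x) := by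
          rw [Finset.sum_sub_distrib, Finset.sum_sub_distrib]
          exact sub_le_sub_right (huv m) _
      _ ≤ ∑ i ∈ Finset.Ici m, max (v i - x) 0 :=
          Finset.sum_le_sum (fun i _ => le_max_left _ _)
      _ ≤ ∑ i ∈ Finset.Ici k, max (v i - x) 0 :=
          Finset.sum_le_sum_of_subset_of_nonneg hsub (fun i _ _ => le_max_right _ _)
  · push_neg at h
    have h1 : ∑ i ∈ Finset.Ici k, max (u i - x) 0 = 0 := by
      apply Finset.sum_eq_zero
      intro i hi
      exact max_eq_right (sub_nonpos.mpr (h i hi))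
    rw [h1]
    exact Finset.sum_nonneg (fun i _ => le_max_right _ _)
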